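/- arXiv:2210.06232 — 6 statements merged into one kernel-verified Lean document; each statement's English description precedes it below -/
import Mathlib

section
/- Let D₁, D₂, D₃ be skew-symmetric real N×N matrices, let 𝔻 be the 3N×3N block matrix [[0, −D₃, D₂], [D₃, 0, −D₁], [−D₂, D₁, 0]], and for μ, ε > 0 let 𝒟 := (1/√(με))·[[0, −𝔻], [𝔻, 0]] (a 6N×6N block matrix). Then 𝔻 is symmetric (𝔻ᵀ = 𝔻), 𝒟 is skew-symmetric (𝒟ᵀ = −𝒟), and for every real t the matrix exponential exp(t𝒟) is orthogonal; in particular ‖exp(t𝒟)u‖ = ‖u‖ for every u ∈ ℝ^(6N), where ‖·‖ is the Euclidean norm. -/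
open Matrix

def blockMat3 {N : ℕ} {α : Type*} (A : Fin 3 → Fin 3 → Matrix (Fin N) (Fin N) α) :
    Matrix (Fin 3 × Fin N) (Fin 3 × Fin N) α :=
  Matrix.of fun p q => A p.1 q.1 p.2 q.2

lemma orth_dot {n : Type*} [Fintype n] [DecidableEq n] {M : Matrix n n ℝ}
    (h : Mᵀ * M = 1) (v : n → ℝ) :
    (M *ᵥ v) ⬝ᵥ (M *ᵥ v) = v ⬝ᵥ v := by
  rw [Matrix.dotProduct_mulVec, ← Matrix.vecMul_transpose, Matrix.vecMul_vecMul, h,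
    Matrix.vecMul_one]

/-- for skew-symmetric real `D₁, D₂, D₃`, the discrete curl matrix `𝔻` is
symmetric, `𝒟 = (1/√(με))[[0,-𝔻],[𝔻,0]]` is skew-symmetric, and `exp(t𝒟)` is orthogonal,
hence preserves the Euclidean norm on `ℝ^(6N)`. -/
theorem discrete_curl_skew_exp_orthogonal {N : ℕ} (μ ε : ℝ) (hμ : 0 < μ) (hε : 0 < ε)
    (D1 D2 D3 : Matrix (Fin N) (Fin N) ℝ)
    (hD1 : D1ᵀ = -D1) (hD2 : D2ᵀ = -D2) (hD3 : D3ᵀ = -D3)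
    (𝔻 : Matrix (Fin 3 × Fin N) (Fin 3 × Fin N) ℝ)
    (h𝔻 : 𝔻 = blockMat3 ![![0, -D3, D2], ![D3, 0, -D1], ![-D2, D1, 0]])
    (𝒟 : Matrix ((Fin 3 × Fin N) ⊕ (Fin 3 × Fin N)) ((Fin 3 × Fin N) ⊕ (Fin 3 × Fin N)) ℝ)
    (h𝒟 : 𝒟 = (Real.sqrt (μ * ε))⁻¹ • Matrix.fromBlocks 0 (-𝔻) 𝔻 0) :
    𝔻ᵀ = 𝔻 ∧
    𝒟ᵀ = -𝒟 ∧
    (∀ t : ℝ,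
      (NormedSpace.exp (t • 𝒟))ᵀ * NormedSpace.exp (t • 𝒟) = 1 ∧
      ∀ u : EuclideanSpace ℝ ((Fin 3 × Fin N) ⊕ (Fin 3 × Fin N)),
        ‖(WithLp.equiv 2 (((Fin 3 × Fin N) ⊕ (Fin 3 × Fin N)) → ℝ)).symm
            ((NormedSpace.exp (t • 𝒟)).mulVec
              ((WithLp.equiv 2 (((Fin 3 × Fin N) ⊕ (Fin 3 × Fin N)) → ℝ)) u))‖ = ‖u‖) := by
  have hsym : 𝔻ᵀ = 𝔻 := by
    subst h𝔻
    ext ⟨i, a⟩ ⟨j, b⟩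
    have h1 := congrFun (congrFun hD1 a) b
    have h2 := congrFun (congrFun hD2 a) b
    have h3 := congrFun (congrFun hD3 a) b
    simp only [Matrix.transpose_apply, Matrix.neg_apply] at h1 h2 h3
    fin_cases i <;> fin_cases j <;>
      simp_all [blockMat3, Matrix.transpose_apply]
  have hskew : 𝒟ᵀ = -𝒟 := by
    subst h𝒟
    rw [Matrix.transpose_smul, Matrix.fromBlocks_transpose, ← smul_neg]
    congr 1
    simp [hsym, Matrix.fromBlocks_neg]
  refine ⟨hsym, hskew, fun t => ?_⟩
  have hskew' : (t • 𝒟)ᵀ = -(t • 𝒟) := by rw [Matrix.transpose_smul, hskew, smul_neg]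
  have horth : (NormedSpace.exp (t • 𝒟))ᵀ * NormedSpace.exp (t • 𝒟) = 1 := by
    have hc := Matrix.exp_add_of_commute (-(t • 𝒟)) (t • 𝒟) ((Commute.refl _).neg_left)
    rw [← Matrix.exp_transpose, hskew', ← hc, neg_add_cancel, NormedSpace.exp_zero]
  refine ⟨horth, fun u => ?_⟩
  rw [EuclideanSpace.norm_eq, EuclideanSpace.norm_eq]
  congr 1
  have := orth_dot horth ((WithLp.equiv 2 _) u)
  simpa [dotProduct, Real.norm_eq_abs, sq_abs, pow_two] using this
end

section
/- Let N be a positive integer and μ, ε > 0 real. Let D₁, D₂, D₃ be pairwise commuting skew-symmetric real N×N matrices, 𝔻 := [[0, −D₃, D₂], [D₃, 0, −D₁], [−D₂, D₁, 0]] (3N×3N), and 𝒟 := (1/√(με))·[[0, −𝔻], [𝔻, 0]] (6N×6N). Given H⁰, E⁰ ∈ ℝ^(3N), define (√μ·H^t, √ε·E^t) = exp(t𝒟)·(√μ·H⁰, √ε·E⁰) and set Ḣ^t := −(1/μ)·𝔻·E^t and Ė^t := (1/ε)·𝔻·H^t. Then μ·‖Ḣ^t‖² + ε·‖Ė^t‖²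 = μ·‖Ḣ⁰‖² + ε·‖Ė⁰‖² for all t ∈ ℝ. -/
open Matrix

/-- The `3N × 3N` block-diagonal matrix with each diagonal block equal to `D`. -/
def blockDiag3 {N : ℕ} {α : Type*} [Zero α] (D : Matrix (Fin N) (Fin N) α) :
    Matrix (Fin 3 × Fin N) (Fin 3 × Fin N) α :=
  Matrix.of fun p q => if p.1 = q.1 then D p.2 q.2 else 0

/-- the fully discrete exponential scheme exactly conserves the discrete energy ℰ₂: `μ‖Ḣᵗ‖² + ε‖Ėᵗ‖²` is constant in `t`, where `Ḣᵗ = -(1/μ)𝔻Eᵗ` and `Ėᵗ = (1/ε)𝔻Hᵗ`. -/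
theorem discrete_energy_conservation_E2 {N : ℕ} (hN : 0 < N) (μ ε : ℝ) (hμ : 0 < μ) (hε : 0 < ε)
    (D1 D2 D3 : Matrix (Fin N) (Fin N) ℝ)
    (h12 : D1 * D2 = D2 * D1) (h13 : D1 * D3 = D3 * D1) (h23 : D2 * D3 = D3 * D2)
    (hD1 : D1ᵀ = -D1) (hD2 : D2ᵀ = -D2) (hD3 : D3ᵀ = -D3)
    (𝔻 : Matrix (Fin 3 × Fin N) (Fin 3 × Fin N) ℝ)
    (h𝔻 : 𝔻 = blockMat3 ![![0, -D3, D2], ![D3, 0, -D1], ![-D2, D1, 0]])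
    (𝒟 : Matrix ((Fin 3 × Fin N) ⊕ (Fin 3 × Fin N)) ((Fin 3 × Fin N) ⊕ (Fin 3 × Fin N)) ℝ)
    (h𝒟 : 𝒟 = (Real.sqrt (μ * ε))⁻¹ • Matrix.fromBlocks 0 (-𝔻) 𝔻 0)
    (H E : ℝ → (Fin 3 × Fin N → ℝ))
    (hprop : ∀ t : ℝ,
      Sum.elim (fun i => Real.sqrt μ * H t i) (fun i => Real.sqrt ε * E t i) =
        (NormedSpace.exp (t • 𝒟)).mulVec
          (Sum.elim (fun i => Real.sqrt μ * H 0 i) (fun i => Real.sqrt ε * E 0 i)))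
    (Hdot Edot : ℝ → (Fin 3 × Fin N → ℝ))
    (hHdot : ∀ t : ℝ, Hdot t = (-(1 / μ)) • 𝔻.mulVec (E t))
    (hEdot : ∀ t : ℝ, Edot t = (1 / ε) • 𝔻.mulVec (H t)) :
    ∀ t : ℝ,
      μ * (∑ i, Hdot t i ^ 2) + ε * (∑ i, Edot t i ^ 2) =
        μ * (∑ i, Hdot 0 i ^ 2) + ε * (∑ i, Edot 0 i ^ 2) := by
  have hsμ : Real.sqrt μ * Real.sqrt μ = μ := Real.mul_self_sqrt hμ.le
  have hsε : Real.sqrt ε * Real.sqrt ε = ε := Real.mul_self_sqrt hε.le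
  have hsμ0 : (0:ℝ) < Real.sqrt μ := Real.sqrt_pos.2 hμ
  have hsε0 : (0:ℝ) < Real.sqrt ε := Real.sqrt_pos.2 hε
  -- 𝔻 is symmetric
  have hDsym : 𝔻ᵀ = 𝔻 := by
    subst h𝔻
    have e1 : ∀ a b, D1 a b = -D1 b a := fun a b => by
      have := congrFun (congrFun hD1 b) a; simpa [Matrix.transpose_apply] using this
    have e2 : ∀ a b, D2 a b = -D2 b a := fun a b => by
      have := congrFun (congrFun hD2 b) a; simpa [Matrix.transpose_apply] using this
    have e3 : ∀ a b, D3 a b = -D3 b a := fun a b => by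
      have := congrFun (congrFun hD3 b) a; simpa [Matrix.transpose_apply] using this
    ext ⟨i, n⟩ ⟨j, m⟩
    fin_cases i <;> fin_cases j <;>
      simp [blockMat3, Matrix.transpose_apply] <;>
      linarith [e1 n m, e1 m n, e2 n m, e2 m n, e3 n m, e3 m n]
  -- 𝒟 is skew-symmetric
  have h𝒟skew : 𝒟ᵀ = -𝒟 := by
    rw [h𝒟, Matrix.transpose_smul, Matrix.fromBlocks_transpose]
    rw [hDsym, ← smul_neg]
    congr 1
    ext (i | i) (j | j) <;> simp [Matrix.fromBlocks] <;>
      first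
        | exact congrFun (congrFun hDsym _) _
        | exact (congrFun (congrFun hDsym _) _).symm
  -- exp(t𝒟) is orthogonal
  have horth : ∀ t : ℝ,
      (NormedSpace.exp (t • 𝒟))ᵀ * NormedSpace.exp (t • 𝒟) = 1 := by
    intro t
    rw [← Matrix.exp_transpose]
    have hT : (t • 𝒟)ᵀ = -(t • 𝒟) := by rw [Matrix.transpose_smul, h𝒟skew, smul_neg]
    rw [hT, ← Matrix.exp_add_of_commute _ _ (Commute.neg_left (Commute.refl (t • 𝒟))),
      neg_add_cancel, NormedSpace.exp_zero]
  -- norm preservation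
  have hnorm : ∀ (t : ℝ) (v : ((Fin 3 × Fin N) ⊕ (Fin 3 × Fin N)) → ℝ),
      ((NormedSpace.exp (t • 𝒟)).mulVec v) ⬝ᵥ ((NormedSpace.exp (t • 𝒟)).mulVec v)
        = v ⬝ᵥ v := by
    intro t v
    set M := NormedSpace.exp (t • 𝒟) with hM
    calc (M.mulVec v) ⬝ᵥ (M.mulVec v) = v ⬝ᵥ ((Mᵀ * M).mulVec v) := by
          rw [← Matrix.mulVec_mulVec, Matrix.mulVec_transpose,
            dotProduct_mulVec, dotProduct_comm]
      _ = v ⬝ᵥ v := by rw [horth t, Matrix.one_mulVec]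
  -- key velocity vector
  set v : ℝ → (((Fin 3 × Fin N) ⊕ (Fin 3 × Fin N)) → ℝ) :=
    fun t => Sum.elim (fun i => Real.sqrt μ * Hdot t i) (fun i => Real.sqrt ε * Edot t i)
    with hv
  have hvD : ∀ t : ℝ, v t = 𝒟.mulVec
      (Sum.elim (fun i => Real.sqrt μ * H t i) (fun i => Real.sqrt ε * E t i)) := by
    intro t
    rw [h𝒟, Matrix.smul_mulVec, Matrix.fromBlocks_mulVec]
    funext j
    have hc1 : (Real.sqrt (μ * ε))⁻¹ * Real.sqrt ε = Real.sqrt μ * (1 / μ) := by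
      rw [Real.sqrt_mul hμ.le]
      field_simp
      nlinarith [hsμ]
    have hc2 : (Real.sqrt (μ * ε))⁻¹ * Real.sqrt μ = Real.sqrt ε * (1 / ε) := by
      rw [Real.sqrt_mul hμ.le]
      field_simp
      nlinarith [hsε]
    cases j with
    | inl i =>
      simp only [hv, Sum.elim_inl, hHdot t, Pi.smul_apply, smul_eq_mul,
        Pi.smul_apply, Matrix.zero_mulVec, Pi.zero_apply, zero_add,
        Matrix.neg_mulVec, Pi.neg_apply, Sum.elim_comp_inl, Sum.elim_comp_inr]
      have : 𝔻.mulVec (fun i => Real.sqrt ε * E t i) i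
          = Real.sqrt ε * 𝔻.mulVec (E t) i := by
        simp [Matrix.mulVec, dotProduct, Finset.mul_sum]
        exact Finset.sum_congr rfl (fun x _ => by ring)
      rw [this]
      first
        | linear_combination (𝔻.mulVec (E t) i) * hc1
        | linear_combination (-(𝔻.mulVec (E t) i)) * hc1
    | inr i =>
      simp only [hv, Sum.elim_inr, hEdot t, Pi.smul_apply, smul_eq_mul,
        Matrix.zero_mulVec, Pi.zero_apply, add_zero, Sum.elim_comp_inl]
      have : 𝔻.mulVec (fun i => Real.sqrt μ * H t i) i
          = Real.sqrt μ * 𝔻.mulVec (H t) i := by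
        simp [Matrix.mulVec, dotProduct, Finset.mul_sum]
        exact Finset.sum_congr rfl (fun x _ => by ring)
      rw [this]
      first
        | linear_combination (𝔻.mulVec (H t) i) * hc2
        | linear_combination (-(𝔻.mulVec (H t) i)) * hc2
  -- v t = exp(t𝒟) ⬝ v 0
  have hvexp : ∀ t : ℝ, v t = (NormedSpace.exp (t • 𝒟)).mulVec (v 0) := by
    intro t
    have hcomm : 𝒟 * NormedSpace.exp (t • 𝒟) = NormedSpace.exp (t • 𝒟) * 𝒟 :=
      (((Commute.refl 𝒟).smul_right t).exp_right).eq
    rw [hvD t, hprop t, Matrix.mulVec_mulVec, hcomm, ← Matrix.mulVec_mulVec, ← hvD 0]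
  -- energy equals ‖v‖²
  have henergy : ∀ t : ℝ,
      μ * (∑ i, Hdot t i ^ 2) + ε * (∑ i, Edot t i ^ 2) = v t ⬝ᵥ v t := by
    intro t
    simp only [hv, dotProduct, Fintype.sum_sum_type, Sum.elim_inl, Sum.elim_inr,
      Finset.mul_sum]
    congr 1 <;> apply Finset.sum_congr rfl <;> intro i _ <;> ring_nf <;> nlinarith [hsμ, hsε,
      sq_nonneg (Hdot t i), sq_nonneg (Edot t i)]
  intro t
  rw [henergy t, henergy 0, hvexp t, hnorm]
end

section
/- Let N be a positive integer and μ, ε > 0 real. Let D₁, D₂, D₃ be pairwise commuting skew-symmetric real N×N matrices, 𝔻 := [[0, −D₃, D₂], [D₃, 0, −D₁], [−D₂, D₁, 0]] (3N×3N), 𝒟 := (1/√(με))·[[0, −𝔻], [𝔻, 0]] (6N×6N), and for k = 1, 2, 3 let B_k be the block-diagonal 3N×3N matrix with each diagonal block equal to D_k. Given H⁰, E⁰ ∈ ℝ^(3N), define (√μ·H^t, √ε·E^t) = exp(t𝒟)·(√μ·H⁰, √ε·E⁰). Then for each k = 1, 2, 3 and all t ∈ ℝ: μ·‖B_k H^t‖²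 + ε·‖B_k E^t‖² = μ·‖B_k H⁰‖² + ε·‖B_k E⁰‖². -/
open Matrix

lemma blockDiag3_mul_blockMat3 {N : ℕ} (D : Matrix (Fin N) (Fin N) ℝ)
    (A : Fin 3 → Fin 3 → Matrix (Fin N) (Fin N) ℝ) :
    blockDiag3 D * blockMat3 A = blockMat3 fun i j => D * A i j := by
  ext ⟨i, m⟩ ⟨j, n⟩
  simp [blockDiag3, blockMat3, Matrix.mul_apply, Fintype.sum_prod_type, ite_mul]

lemma blockMat3_mul_blockDiag3 {N : ℕ} (D : Matrix (Fin N) (Fin N) ℝ)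
    (A : Fin 3 → Fin 3 → Matrix (Fin N) (Fin N) ℝ) :
    blockMat3 A * blockDiag3 D = blockMat3 fun i j => A i j * D := by
  ext ⟨i, m⟩ ⟨j, n⟩
  simp [blockDiag3, blockMat3, Matrix.mul_apply, Fintype.sum_prod_type, mul_ite]

lemma blockMat3_transpose {N : ℕ} (A : Fin 3 → Fin 3 → Matrix (Fin N) (Fin N) ℝ) :
    (blockMat3 A)ᵀ = blockMat3 fun i j => (A j i)ᵀ := rfl

lemma sum_sq_mulVec_orth {n : Type*} [Fintype n] [DecidableEq n] (Q : Matrix n n ℝ)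
    (h : Qᵀ * Q = 1) (v : n → ℝ) : ∑ i, (Q.mulVec v i) ^ 2 = ∑ i, v i ^ 2 := by
  calc ∑ i, (Q.mulVec v i) ^ 2 = (Q.mulVec v) ⬝ᵥ (Q.mulVec v) := by
        simp [dotProduct, sq]
    _ = ((Q.mulVec v) ᵥ* Q) ⬝ᵥ v := Matrix.dotProduct_mulVec _ _ _
    _ = v ⬝ᵥ v := by
        rw [← Matrix.vecMul_transpose, Matrix.vecMul_vecMul, h, Matrix.vecMul_one]
    _ = ∑ i, v i ^ 2 := by simp [dotProduct, sq]

/-- the fully discrete exponential scheme exactly conserves the discrete energy ℰ₃: `μ‖B_k Hᵗ‖² + ε‖B_k Eᵗ‖²` is constant in `t` for each `k`. -/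
theorem discrete_energy_conservation_E3 {N : ℕ} (hN : 0 < N) (μ ε : ℝ) (hμ : 0 < μ) (hε : 0 < ε)
    (D1 D2 D3 : Matrix (Fin N) (Fin N) ℝ)
    (h12 : D1 * D2 = D2 * D1) (h13 : D1 * D3 = D3 * D1) (h23 : D2 * D3 = D3 * D2)
    (hD1 : D1ᵀ = -D1) (hD2 : D2ᵀ = -D2) (hD3 : D3ᵀ = -D3)
    (𝔻 : Matrix (Fin 3 × Fin N) (Fin 3 × Fin N) ℝ)
    (h𝔻 : 𝔻 = blockMat3 ![![0, -D3, D2], ![D3, 0, -D1], ![-D2, D1, 0]])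
    (𝒟 : Matrix ((Fin 3 × Fin N) ⊕ (Fin 3 × Fin N)) ((Fin 3 × Fin N) ⊕ (Fin 3 × Fin N)) ℝ)
    (h𝒟 : 𝒟 = (Real.sqrt (μ * ε))⁻¹ • Matrix.fromBlocks 0 (-𝔻) 𝔻 0)
    (H E : ℝ → (Fin 3 × Fin N → ℝ))
    (hprop : ∀ t : ℝ,
      Sum.elim (fun i => Real.sqrt μ * H t i) (fun i => Real.sqrt ε * E t i) =
        (NormedSpace.exp (t • 𝒟)).mulVec
          (Sum.elim (fun i => Real.sqrt μ * H 0 i) (fun i => Real.sqrt ε * E 0 i)))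
    (B : Fin 3 → Matrix (Fin 3 × Fin N) (Fin 3 × Fin N) ℝ)
    (hB : ∀ k : Fin 3, B k = blockDiag3 (![D1, D2, D3] k)) :
    ∀ k : Fin 3, ∀ t : ℝ,
      μ * (∑ i, (B k).mulVec (H t) i ^ 2) + ε * (∑ i, (B k).mulVec (E t) i ^ 2) =
        μ * (∑ i, (B k).mulVec (H 0) i ^ 2) + ε * (∑ i, (B k).mulVec (E 0) i ^ 2) := by
  intro k t
  have hcomm𝔻 : B k * 𝔻 = 𝔻 * B k := by
    rw [hB, h𝔻, blockDiag3_mul_blockMat3, blockMat3_mul_blockDiag3]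
    refine congrArg blockMat3 (funext fun i => funext fun j => ?_)
    fin_cases k <;> fin_cases i <;> fin_cases j <;>
      simp [Matrix.mul_neg, Matrix.neg_mul, h12, h13, h23]
  have h𝔻sym : 𝔻ᵀ = 𝔻 := by
    rw [h𝔻, blockMat3_transpose]
    refine congrArg blockMat3 (funext fun i => funext fun j => ?_)
    fin_cases i <;> fin_cases j <;>
      simp [hD1, hD2, hD3, Matrix.transpose_neg]
  have hskew : 𝒟ᵀ = -𝒟 := by
    rw [h𝒟, Matrix.transpose_smul, Matrix.fromBlocks_transpose]
    rw [show (-𝔻)ᵀ = -𝔻ᵀ from Matrix.transpose_neg 𝔻]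
    rw [h𝔻sym, ← smul_neg, Matrix.fromBlocks_neg]
    simp
  set Q := NormedSpace.exp (t • 𝒟) with hQ
  have hQorth : Qᵀ * Q = 1 := by
    have h1 : NormedSpace.exp (-(t • 𝒟)) * NormedSpace.exp (t • 𝒟) = 1 := by
      rw [← Matrix.exp_add_of_commute (-(t • 𝒟)) (t • 𝒟) ((Commute.refl (t • 𝒟)).neg_left),
        neg_add_cancel, NormedSpace.exp_zero]
    rw [hQ, ← Matrix.exp_transpose, Matrix.transpose_smul, hskew, smul_neg, h1]
  set 𝔹 := Matrix.fromBlocks (B k) 0 0 (B k) with h𝔹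
  have hc𝒟 : Commute 𝔹 𝒟 := by
    rw [h𝒟]
    refine Commute.smul_right ?_ _
    show 𝔹 * _ = _ * 𝔹
    rw [h𝔹]
    simp [Matrix.fromBlocks_multiply, Matrix.mul_neg, Matrix.neg_mul, hcomm𝔻]
  have hcQ : 𝔹 * Q = Q * 𝔹 := (hc𝒟.smul_right t).exp_right
  set v : ℝ → ((Fin 3 × Fin N) ⊕ (Fin 3 × Fin N) → ℝ) :=
    fun s => Sum.elim (fun i => Real.sqrt μ * H s i) (fun i => Real.sqrt ε * E s i) with hv
  have hBv : ∀ s, 𝔹.mulVec (v s) =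
      Sum.elim (fun i => Real.sqrt μ * (B k).mulVec (H s) i)
        (fun i => Real.sqrt ε * (B k).mulVec (E s) i) := by
    intro s
    funext i
    cases i <;>
      simp [h𝔹, hv, Matrix.mulVec, dotProduct, Fintype.sum_sum_type, Matrix.fromBlocks,
        Finset.mul_sum, mul_comm, mul_left_comm, mul_assoc]
  have hsum : ∀ s, (∑ i, (𝔹.mulVec (v s)) i ^ 2) =
      μ * (∑ i, (B k).mulVec (H s) i ^ 2) + ε * (∑ i, (B k).mulVec (E s) i ^ 2) := by
    intro s
    rw [hBv s, Fintype.sum_sum_type]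
    simp [mul_pow, Real.sq_sqrt hμ.le, Real.sq_sqrt hε.le, Finset.mul_sum]
  have hvt : v t = Q.mulVec (v 0) := hprop t
  have hmain : 𝔹.mulVec (v t) = Q.mulVec (𝔹.mulVec (v 0)) := by
    rw [hvt, Matrix.mulVec_mulVec, hcQ, ← Matrix.mulVec_mulVec]
  calc μ * (∑ i, (B k).mulVec (H t) i ^ 2) + ε * (∑ i, (B k).mulVec (E t) i ^ 2)
      = ∑ i, (𝔹.mulVec (v t)) i ^ 2 := (hsum t).symm
    _ = ∑ i, (Q.mulVec (𝔹.mulVec (v 0))) i ^ 2 := by rw [hmain]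
    _ = ∑ i, (𝔹.mulVec (v 0)) i ^ 2 := sum_sq_mulVec_orth Q hQorth _
    _ = _ := hsum 0
end

section
/- Let N be a positive integer and μ, ε > 0 real. Let D₁, D₂, D₃ be pairwise commuting skew-symmetric real N×N matrices, 𝔻 := [[0, −D₃, D₂], [D₃, 0, −D₁], [−D₂, D₁, 0]] (3N×3N), and 𝒟 := (1/√(με))·[[0, −𝔻], [𝔻, 0]] (6N×6N). Given H⁰, E⁰ ∈ ℝ^(3N), define (√μ·H^t, √ε·E^t) = exp(t𝒟)·(√μ·H⁰, √ε·E⁰). Then the discrete helicity is exactly conserved: (1/(2ε))·⟨H^t, 𝔻H^t⟩ + (1/(2μ))·⟨E^t, 𝔻E^t⟩ = (1/(2ε))·⟨H⁰, 𝔻H⁰⟩ + (1/(2μ))·⟨E⁰, 𝔻E⁰⟩ for all t ∈ ℝ. -/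
open Matrix

theorem inv_lemma {n : Type*} [Fintype n] [DecidableEq n] (P M : Matrix n n ℝ)
    (hM : Mᵀ = M) (h : Pᵀ * M * P = M) (x : n → ℝ) :
    (P.mulVec x) ⬝ᵥ M.mulVec (P.mulVec x) = x ⬝ᵥ M.mulVec x := by
  rw [mulVec_mulVec, dotProduct_mulVec, ← mulVec_transpose, mulVec_mulVec,
    Matrix.transpose_mul, hM, Matrix.mul_assoc, ← Matrix.mul_assoc, h, dotProduct_comm]

theorem expand_lemma {N : ℕ} (𝔻 : Matrix (Fin 3 × Fin N) (Fin 3 × Fin N) ℝ)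
    (a b : ℝ) (v w : Fin 3 × Fin N → ℝ) :
    (Sum.elim (fun i => a * v i) (fun i => b * w i)) ⬝ᵥ
      (Matrix.fromBlocks 𝔻 0 0 𝔻).mulVec (Sum.elim (fun i => a * v i) (fun i => b * w i)) =
    a * a * (v ⬝ᵥ 𝔻.mulVec v) + b * b * (w ⬝ᵥ 𝔻.mulVec w) := by
  have hv : (fun i => a * v i) = a • v := rfl
  have hw : (fun i => b * w i) = b • w := rfl
  rw [hv, hw, Matrix.fromBlocks_mulVec]
  simp [Matrix.mulVec_smul, dotProduct_smul, smul_dotProduct,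
    sumElim_dotProduct_sumElim, smul_eq_mul]
  ring

/-- the fully discrete exponential scheme exactly conserves the discrete helicity ℋ₁: `(1/(2ε))⟨Hᵗ, 𝔻Hᵗ⟩ + (1/(2μ))⟨Eᵗ, 𝔻Eᵗ⟩` is constant in `t`. -/
theorem discrete_helicity_conservation_H1 {N : ℕ} (hN : 0 < N) (μ ε : ℝ) (hμ : 0 < μ) (hε : 0 < ε)
    (D1 D2 D3 : Matrix (Fin N) (Fin N) ℝ)
    (h12 : D1 * D2 = D2 * D1) (h13 : D1 * D3 = D3 * D1) (h23 : D2 * D3 = D3 * D2)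
    (hD1 : D1ᵀ = -D1) (hD2 : D2ᵀ = -D2) (hD3 : D3ᵀ = -D3)
    (𝔻 : Matrix (Fin 3 × Fin N) (Fin 3 × Fin N) ℝ)
    (h𝔻 : 𝔻 = blockMat3 ![![0, -D3, D2], ![D3, 0, -D1], ![-D2, D1, 0]])
    (𝒟 : Matrix ((Fin 3 × Fin N) ⊕ (Fin 3 × Fin N)) ((Fin 3 × Fin N) ⊕ (Fin 3 × Fin N)) ℝ)
    (h𝒟 : 𝒟 = (Real.sqrt (μ * ε))⁻¹ • Matrix.fromBlocks 0 (-𝔻) 𝔻 0)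
    (H E : ℝ → (Fin 3 × Fin N → ℝ))
    (hprop : ∀ t : ℝ,
      Sum.elim (fun i => Real.sqrt μ * H t i) (fun i => Real.sqrt ε * E t i) =
        (NormedSpace.exp (t • 𝒟)).mulVec
          (Sum.elim (fun i => Real.sqrt μ * H 0 i) (fun i => Real.sqrt ε * E 0 i))) :
    ∀ t : ℝ,
      (1 / (2 * ε)) * (H t ⬝ᵥ 𝔻.mulVec (H t)) + (1 / (2 * μ)) * (E t ⬝ᵥ 𝔻.mulVec (E t)) =
        (1 / (2 * ε)) * (H 0 ⬝ᵥ 𝔻.mulVec (H 0)) + (1 / (2 * μ)) * (E 0 ⬝ᵥ 𝔻.mulVec (E 0)) := by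
  intro t
  -- 𝔻 is symmetric
  have d1 : ∀ n m, D1 m n = -D1 n m := fun n m => by
    have := congrFun (congrFun hD1 n) m; simpa [Matrix.transpose_apply] using this
  have d2 : ∀ n m, D2 m n = -D2 n m := fun n m => by
    have := congrFun (congrFun hD2 n) m; simpa [Matrix.transpose_apply] using this
  have d3 : ∀ n m, D3 m n = -D3 n m := fun n m => by
    have := congrFun (congrFun hD3 n) m; simpa [Matrix.transpose_apply] using this
  have hsym : 𝔻ᵀ = 𝔻 := by
    subst h𝔻
    ext ⟨i, n⟩ ⟨j, m⟩
    fin_cases i <;> fin_cases j <;>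
      simp [blockMat3] <;>
      linarith [d1 n m, d2 n m, d3 n m, d1 m n, d2 m n, d3 m n]
  set M : Matrix ((Fin 3 × Fin N) ⊕ (Fin 3 × Fin N)) ((Fin 3 × Fin N) ⊕ (Fin 3 × Fin N)) ℝ :=
    Matrix.fromBlocks 𝔻 0 0 𝔻 with hM
  have hMsym : Mᵀ = M := by
    rw [hM, Matrix.fromBlocks_transpose, hsym]; simp
  have hDskew : 𝒟ᵀ = -𝒟 := by
    rw [h𝒟, Matrix.transpose_smul, Matrix.fromBlocks_transpose, ← smul_neg,
      Matrix.fromBlocks_neg]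
    simp [hsym]
  have hcomm : Commute 𝒟 M := by
    unfold Commute SemiconjBy
    rw [h𝒟, hM, Matrix.smul_mul, Matrix.mul_smul, Matrix.fromBlocks_multiply,
      Matrix.fromBlocks_multiply]
    simp [Matrix.neg_mul, Matrix.mul_neg]
  -- the key invariance: exp(t𝒟)ᵀ M exp(t𝒟) = M
  have hP : (NormedSpace.exp (t • 𝒟))ᵀ * M * (NormedSpace.exp (t • 𝒟)) = M := by
    rw [← Matrix.exp_transpose, Matrix.transpose_smul, hDskew, smul_neg, ← neg_smul]
    have hc1 : Commute (-t • 𝒟) M := by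
      rw [neg_smul]; exact (hcomm.smul_left t).neg_left
    rw [(hc1.exp_left).eq, Matrix.mul_assoc]
    have hc2 : Commute (-t • 𝒟) (t • 𝒟) := ((Commute.refl 𝒟).smul_left (-t)).smul_right t
    rw [← Matrix.exp_add_of_commute _ _ hc2]
    simp [← add_smul]
  have key :
      (Sum.elim (fun i => Real.sqrt μ * H t i) (fun i => Real.sqrt ε * E t i)) ⬝ᵥ
        M.mulVec (Sum.elim (fun i => Real.sqrt μ * H t i) (fun i => Real.sqrt ε * E t i)) =
      (Sum.elim (fun i => Real.sqrt μ * H 0 i) (fun i => Real.sqrt ε * E 0 i)) ⬝ᵥ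
        M.mulVec (Sum.elim (fun i => Real.sqrt μ * H 0 i) (fun i => Real.sqrt ε * E 0 i)) := by
    rw [hprop t]
    exact inv_lemma _ _ hMsym hP _
  rw [hM] at key
  rw [expand_lemma, expand_lemma, Real.mul_self_sqrt hμ.le, Real.mul_self_sqrt hε.le] at key
  have hμ' := hμ.ne'
  have hε' := hε.ne'
  field_simp
  nlinarith [key]
end

section
/- Let N be a positive integer and μ, ε > 0 real. Let D₁, D₂, D₃ be pairwise commuting skew-symmetric real N×N matrices, 𝔻 := [[0, −D₃, D₂], [D₃, 0, −D₁], [−D₂, D₁, 0]] (3N×3N), and 𝒟 := (1/√(με))·[[0, −𝔻], [𝔻, 0]] (6N×6N). Given H⁰, E⁰ ∈ ℝ^(3N), define (√μ·H^t, √ε·E^t) = exp(t𝒟)·(√μ·H⁰, √ε·E⁰) and set Ḣ^t := −(1/μ)·𝔻·E^t, Ė^t := (1/ε)·𝔻·H^t. Then (1/(2ε))·⟨Ḣ^t, 𝔻Ḣ^t⟩ + (1/(2μ))·⟨Ė^t, 𝔻Ė^t⟩ = (1/(2ε))·⟨Ḣ⁰, 𝔻Ḣ⁰⟩ + (1/(2μ))·⟨Ė⁰,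 𝔻Ė⁰⟩ for all t ∈ ℝ. -/
open Matrix

/-- the fully discrete exponential scheme exactly conserves the discrete helicity ℋ₂: `(1/(2ε))⟨Ḣᵗ, 𝔻Ḣᵗ⟩ + (1/(2μ))⟨Ėᵗ, 𝔻Ėᵗ⟩` is constant in `t`. -/
theorem discrete_helicity_conservation_H2 {N : ℕ} (hN : 0 < N) (μ ε : ℝ) (hμ : 0 < μ) (hε : 0 < ε)
    (D1 D2 D3 : Matrix (Fin N) (Fin N) ℝ)
    (h12 : D1 * D2 = D2 * D1) (h13 : D1 * D3 = D3 * D1) (h23 : D2 * D3 = D3 * D2)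
    (hD1 : D1ᵀ = -D1) (hD2 : D2ᵀ = -D2) (hD3 : D3ᵀ = -D3)
    (𝔻 : Matrix (Fin 3 × Fin N) (Fin 3 × Fin N) ℝ)
    (h𝔻 : 𝔻 = blockMat3 ![![0, -D3, D2], ![D3, 0, -D1], ![-D2, D1, 0]])
    (𝒟 : Matrix ((Fin 3 × Fin N) ⊕ (Fin 3 × Fin N)) ((Fin 3 × Fin N) ⊕ (Fin 3 × Fin N)) ℝ)
    (h𝒟 : 𝒟 = (Real.sqrt (μ * ε))⁻¹ • Matrix.fromBlocks 0 (-𝔻) 𝔻 0)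
    (H E : ℝ → (Fin 3 × Fin N → ℝ))
    (hprop : ∀ t : ℝ,
      Sum.elim (fun i => Real.sqrt μ * H t i) (fun i => Real.sqrt ε * E t i) =
        (NormedSpace.exp (t • 𝒟)).mulVec
          (Sum.elim (fun i => Real.sqrt μ * H 0 i) (fun i => Real.sqrt ε * E 0 i)))
    (Hdot Edot : ℝ → (Fin 3 × Fin N → ℝ))
    (hHdot : ∀ t : ℝ, Hdot t = (-(1 / μ)) • 𝔻.mulVec (E t))
    (hEdot : ∀ t : ℝ, Edot t = (1 / ε) • 𝔻.mulVec (H t)) :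
    ∀ t : ℝ,
      (1 / (2 * ε)) * (Hdot t ⬝ᵥ 𝔻.mulVec (Hdot t)) +
          (1 / (2 * μ)) * (Edot t ⬝ᵥ 𝔻.mulVec (Edot t)) =
        (1 / (2 * ε)) * (Hdot 0 ⬝ᵥ 𝔻.mulVec (Hdot 0)) +
          (1 / (2 * μ)) * (Edot 0 ⬝ᵥ 𝔻.mulVec (Edot 0)) := by
  -- `𝔻` is symmetric
  have hsym : 𝔻ᵀ = 𝔻 := by
    have e1 : ∀ a b, D1 b a = -D1 a b := fun a b => by
      have := congrFun (congrFun hD1 a) b; simpa using this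
    have e2 : ∀ a b, D2 b a = -D2 a b := fun a b => by
      have := congrFun (congrFun hD2 a) b; simpa using this
    have e3 : ∀ a b, D3 b a = -D3 a b := fun a b => by
      have := congrFun (congrFun hD3 a) b; simpa using this
    rw [h𝔻]
    ext ⟨i, k⟩ ⟨j, l⟩
    fin_cases i <;> fin_cases j <;>
      simp [blockMat3] <;>
      first
        | rfl
        | linarith [e1 k l, e2 k l, e3 k l, e1 l k, e2 l k, e3 l k]
  -- `𝒟` is skew-symmetric
  have hDT : 𝒟ᵀ = -𝒟 := by
    rw [h𝒟, Matrix.transpose_smul, Matrix.fromBlocks_transpose]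
    simp only [Matrix.transpose_zero, Matrix.transpose_neg, hsym, ← smul_neg]
    congr 1
    ext (i | i) (j | j) <;> simp [Matrix.fromBlocks]
  -- The block-diagonal matrix `S = diag(𝔻³, 𝔻³)` commutes with `𝒟`
  set S : Matrix ((Fin 3 × Fin N) ⊕ (Fin 3 × Fin N)) ((Fin 3 × Fin N) ⊕ (Fin 3 × Fin N)) ℝ :=
    Matrix.fromBlocks (𝔻 ^ 3) 0 0 (𝔻 ^ 3) with hS
  have hcomm : Commute 𝒟 S := by
    rw [h𝒟]
    refine Commute.smul_left ?_ _
    have hDP : 𝔻 * 𝔻 ^ 3 = 𝔻 ^ 3 * 𝔻 := by rw [← pow_succ', ← pow_succ]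
    have : (Matrix.fromBlocks 0 (-𝔻) 𝔻 0) * S = S * (Matrix.fromBlocks 0 (-𝔻) 𝔻 0) := by
      rw [hS]; simp [Matrix.fromBlocks_multiply, hDP]
    exact this
  -- quadratic-form transfer lemma
  have key : ∀ {n : Type} [Fintype n] (B C : Matrix n n ℝ) (u : n → ℝ),
      (B *ᵥ u) ⬝ᵥ (C *ᵥ u) = u ⬝ᵥ ((Bᵀ * C) *ᵥ u) := by
    intro n _ B C u
    rw [← Matrix.mulVec_mulVec, dotProduct_comm, Matrix.dotProduct_mulVec,
      dotProduct_comm, ← Matrix.mulVec_transpose]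
  -- invariance of the quadratic form `u ↦ u ⬝ᵥ S u` under `exp (s • 𝒟)`
  set u0 : ((Fin 3 × Fin N) ⊕ (Fin 3 × Fin N)) → ℝ :=
    Sum.elim (fun i => Real.sqrt μ * H 0 i) (fun i => Real.sqrt ε * E 0 i) with hu0
  have hinv : ∀ s : ℝ,
      ((NormedSpace.exp (s • 𝒟)) *ᵥ u0) ⬝ᵥ (S *ᵥ ((NormedSpace.exp (s • 𝒟)) *ᵥ u0)) =
        u0 ⬝ᵥ (S *ᵥ u0) := by
    intro s
    set X := s • 𝒟 with hX
    have hXS : Commute X S := hcomm.smul_left s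
    have hXT : Xᵀ = -X := by rw [hX, Matrix.transpose_smul, hDT, smul_neg]
    have hconj : (NormedSpace.exp X)ᵀ * (S * NormedSpace.exp X) = S := by
      have h1 : S * NormedSpace.exp X = NormedSpace.exp X * S :=
        (hXS.exp_left).eq.symm
      have h2 : (NormedSpace.exp X)ᵀ = NormedSpace.exp (-X) := by
        rw [← hXT, Matrix.exp_transpose]
      have h3 : NormedSpace.exp (-X) * NormedSpace.exp X = 1 := by
        rw [← Matrix.exp_add_of_commute _ _ (Commute.refl X).neg_left, neg_add_cancel,
          NormedSpace.exp_zero]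
      rw [h1, h2, ← mul_assoc, h3, one_mul]
    rw [Matrix.mulVec_mulVec, key, hconj]
  -- express the helicity at time `s` through the quadratic form
  have hq : ∀ s : ℝ,
      (1 / (2 * ε)) * (Hdot s ⬝ᵥ 𝔻.mulVec (Hdot s)) +
          (1 / (2 * μ)) * (Edot s ⬝ᵥ 𝔻.mulVec (Edot s)) =
        (1 / (2 * μ ^ 2 * ε ^ 2)) *
          ((Sum.elim (fun i => Real.sqrt μ * H s i) (fun i => Real.sqrt ε * E s i)) ⬝ᵥ
            (S *ᵥ (Sum.elim (fun i => Real.sqrt μ * H s i) (fun i => Real.sqrt ε * E s i)))) := by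
    intro s
    have hμs : Real.sqrt μ * Real.sqrt μ = μ := Real.mul_self_sqrt hμ.le
    have hεs : Real.sqrt ε * Real.sqrt ε = ε := Real.mul_self_sqrt hε.le
    have hcube : 𝔻ᵀ * (𝔻 * 𝔻) = 𝔻 ^ 3 := by rw [hsym, ← mul_assoc, ← sq, ← pow_succ]
    have hH : Hdot s ⬝ᵥ 𝔻.mulVec (Hdot s) = (1 / μ) ^ 2 * (E s ⬝ᵥ (𝔻 ^ 3) *ᵥ E s) := by
      rw [hHdot s, Matrix.mulVec_smul, smul_dotProduct, dotProduct_smul,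
        Matrix.mulVec_mulVec, key, hcube, smul_eq_mul, smul_eq_mul]
      ring
    have hE : Edot s ⬝ᵥ 𝔻.mulVec (Edot s) = (1 / ε) ^ 2 * (H s ⬝ᵥ (𝔻 ^ 3) *ᵥ H s) := by
      rw [hEdot s, Matrix.mulVec_smul, smul_dotProduct, dotProduct_smul,
        Matrix.mulVec_mulVec, key, hcube, smul_eq_mul, smul_eq_mul]
      ring
    have ha : (fun i => Real.sqrt μ * H s i) = Real.sqrt μ • H s := rfl
    have hb : (fun i => Real.sqrt ε * E s i) = Real.sqrt ε • E s := rfl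
    have hq2 : (Sum.elim (fun i => Real.sqrt μ * H s i) (fun i => Real.sqrt ε * E s i)) ⬝ᵥ
        (S *ᵥ (Sum.elim (fun i => Real.sqrt μ * H s i) (fun i => Real.sqrt ε * E s i))) =
        μ * (H s ⬝ᵥ (𝔻 ^ 3) *ᵥ H s) + ε * (E s ⬝ᵥ (𝔻 ^ 3) *ᵥ E s) := by
      simp only [hS, ha, hb, Matrix.fromBlocks_mulVec, Matrix.zero_mulVec, add_zero, zero_add,
        sumElim_dotProduct_sumElim, Sum.elim_comp_inl, Sum.elim_comp_inr,
        Matrix.mulVec_smul, smul_dotProduct, dotProduct_smul, smul_eq_mul,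
        smul_zero]
      rw [← mul_assoc, ← mul_assoc, hμs, hεs]
    rw [hH, hE, hq2]
    field_simp
    ring
  intro t
  rw [hq t, hq 0]
  congr 1
  have := hinv t
  rw [← hprop t] at this
  rw [this]
end

section
/- Let N be a positive integer and μ, ε > 0 real. Let D₁, D₂, D₃ be pairwise commuting skew-symmetric real N×N matrices, 𝔻 := [[0, −D₃, D₂], [D₃, 0, −D₁], [−D₂, D₁, 0]] (3N×3N), and 𝒟 := (1/√(με))·[[0, −𝔻], [𝔻, 0]] (6N×6N). Given H⁰ = (H⁰_x, H⁰_y, H⁰_z), E⁰ = (E⁰_x, E⁰_y, E⁰_z) ∈ ℝ^(3N), define (√μ·H^t, √ε·E^t) = exp(t𝒟)·(√μ·H⁰, √ε·E⁰) and write H^t = (H^t_x, H^t_y, H^t_z), E^t = (E^t_x, E^t_y, E^t_z). Then the discrete divergences are exactly conserved: for all t ∈ ℝ, D₁(ε E^t_x) + D₂(ε E^t_y) + D₃(ε E^t_z) = D₁(ε E⁰_x) + D₂(ε E⁰_y) + D₃(ε E⁰_z) and D₁(μ H^t_x) + D₂(μ H^t_y) + D₃(μ H^t_z) = D₁(μ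 H⁰_x) + D₂(μ H⁰_y) + D₃(μ H⁰_z). -/
open Matrix

theorem mul_exp_of_mul_eq_zero {A : Type*} [NormedRing A] [NormedAlgebra ℝ A]
    [CompleteSpace A] (a b : A) (h : a * b = 0) : a * NormedSpace.exp b = a := by
  rw [NormedSpace.exp_eq_tsum ℝ, ← (NormedSpace.expSeries_summable' (𝕂 := ℝ) b).tsum_mul_left a]
  rw [tsum_eq_single 0]
  · simp
  · intro n hn
    obtain ⟨m, rfl⟩ := Nat.exists_eq_succ_of_ne_zero hn
    rw [mul_smul_comm, pow_succ', ← mul_assoc, h, zero_mul, smul_zero]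

theorem matrix_mul_exp_of_mul_eq_zero {n : Type*} [Fintype n] [DecidableEq n]
    (a b : Matrix n n ℝ) (h : a * b = 0) : a * NormedSpace.exp b = a := by
  letI : SeminormedRing (Matrix n n ℝ) := Matrix.linftyOpSemiNormedRing
  letI : NormedRing (Matrix n n ℝ) := Matrix.linftyOpNormedRing
  letI : NormedAlgebra ℝ (Matrix n n ℝ) := Matrix.linftyOpNormedAlgebra
  exact mul_exp_of_mul_eq_zero a b h

/-- the fully discrete exponential scheme exactly conserves the discrete divergences: `D₁(εEᵗ_x) + D₂(εEᵗ_y) + D₃(εEᵗ_z)` and `D₁(μHᵗ_x) + D₂(μHᵗ_y) + D₃(μHᵗ_z)` are constant in `t`. -/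
theorem discrete_divergence_conservation {N : ℕ} (hN : 0 < N) (μ ε : ℝ) (hμ : 0 < μ) (hε : 0 < ε)
    (D1 D2 D3 : Matrix (Fin N) (Fin N) ℝ)
    (h12 : D1 * D2 = D2 * D1) (h13 : D1 * D3 = D3 * D1) (h23 : D2 * D3 = D3 * D2)
    (hD1 : D1ᵀ = -D1) (hD2 : D2ᵀ = -D2) (hD3 : D3ᵀ = -D3)
    (𝔻 : Matrix (Fin 3 × Fin N) (Fin 3 × Fin N) ℝ)
    (h𝔻 : 𝔻 = blockMat3 ![![0, -D3, D2], ![D3, 0, -D1], ![-D2, D1, 0]])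
    (𝒟 : Matrix ((Fin 3 × Fin N) ⊕ (Fin 3 × Fin N)) ((Fin 3 × Fin N) ⊕ (Fin 3 × Fin N)) ℝ)
    (h𝒟 : 𝒟 = (Real.sqrt (μ * ε))⁻¹ • Matrix.fromBlocks 0 (-𝔻) 𝔻 0)
    (H E : ℝ → (Fin 3 × Fin N → ℝ))
    (hprop : ∀ t : ℝ,
      Sum.elim (fun i => Real.sqrt μ * H t i) (fun i => Real.sqrt ε * E t i) =
        (NormedSpace.exp (t • 𝒟)).mulVec
          (Sum.elim (fun i => Real.sqrt μ * H 0 i) (fun i => Real.sqrt ε * E 0 i))) :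
    ∀ t : ℝ,
      (D1.mulVec (fun a => ε * E t (0, a)) + D2.mulVec (fun a => ε * E t (1, a)) +
          D3.mulVec (fun a => ε * E t (2, a)) =
        D1.mulVec (fun a => ε * E 0 (0, a)) + D2.mulVec (fun a => ε * E 0 (1, a)) +
          D3.mulVec (fun a => ε * E 0 (2, a))) ∧
      (D1.mulVec (fun a => μ * H t (0, a)) + D2.mulVec (fun a => μ * H t (1, a)) +
          D3.mulVec (fun a => μ * H t (2, a)) =
        D1.mulVec (fun a => μ * H 0 (0, a)) + D2.mulVec (fun a => μ * H 0 (1, a)) +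
          D3.mulVec (fun a => μ * H 0 (2, a))) := by
  intro t
  set A : Fin 3 → Fin 3 → Matrix (Fin N) (Fin N) ℝ :=
    ![![0, -D3, D2], ![D3, 0, -D1], ![-D2, D1, 0]] with hA
  set Dm : Fin 3 → Matrix (Fin N) (Fin N) ℝ := ![D1, D2, D3] with hDm
  -- the "divergence" block matrix: each block row is [D1 D2 D3]
  set G : Matrix (Fin 3 × Fin N) (Fin 3 × Fin N) ℝ :=
    Matrix.of (fun p q => Dm q.1 p.2 q.2) with hG
  -- column relations: divergence of curl is zero
  have hcol : ∀ j : Fin 3, D1 * A 0 j + D2 * A 1 j + D3 * A 2 j = 0 := by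
    intro j
    fin_cases j <;>
      simp [hA, Matrix.mul_neg, h12, h13, h23]
  -- G kills the curl matrix
  have hG𝔻 : G * 𝔻 = 0 := by
    ext ⟨i, a⟩ ⟨j, b⟩
    simp only [Matrix.mul_apply, h𝔻, blockMat3, hG, Matrix.of_apply, Matrix.zero_apply]
    rw [Fintype.sum_prod_type, Fin.sum_univ_three]
    have e1 : ∀ c, Dm 0 a c * A 0 j c b = D1 a c * A 0 j c b := by intro c; rw [hDm]; rfl
    have e2 : ∀ c, Dm 1 a c * A 1 j c b = D2 a c * A 1 j c b := by intro c; rw [hDm]; rfl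
    have e3 : ∀ c, Dm 2 a c * A 2 j c b = D3 a c * A 2 j c b := by intro c; rw [hDm]; rfl
    simp only [e1, e2, e3, ← Matrix.mul_apply, ← Matrix.add_apply]
    rw [hcol j]
    rfl
  set S := Matrix.fromBlocks G 0 0 G with hS
  have hS𝒟 : S * 𝒟 = 0 := by
    rw [h𝒟, Matrix.mul_smul, hS, Matrix.fromBlocks_multiply]
    simp [hG𝔻, Matrix.mul_neg]
  have hSexp : S * NormedSpace.exp (t • 𝒟) = S :=
    matrix_mul_exp_of_mul_eq_zero S (t • 𝒟) (by rw [Matrix.mul_smul, hS𝒟, smul_zero])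
  have key : S.mulVec (Sum.elim (fun i => Real.sqrt μ * H t i) (fun i => Real.sqrt ε * E t i)) =
      S.mulVec (Sum.elim (fun i => Real.sqrt μ * H 0 i) (fun i => Real.sqrt ε * E 0 i)) := by
    rw [hprop t, Matrix.mulVec_mulVec, hSexp]
  -- unpack S.mulVec on Sum.elim
  have hSmul : ∀ (f g : Fin 3 × Fin N → ℝ),
      S.mulVec (Sum.elim f g) = Sum.elim (G.mulVec f) (G.mulVec g) := by
    intro f g
    rw [hS, Matrix.fromBlocks_mulVec]
    simp
  rw [hSmul, hSmul] at key
  -- evaluate G.mulVec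
  have hGmul : ∀ (w : Fin 3 × Fin N → ℝ) (i : Fin 3) (a : Fin N),
      G.mulVec w (i, a) =
        D1.mulVec (fun c => w (0, c)) a + D2.mulVec (fun c => w (1, c)) a +
          D3.mulVec (fun c => w (2, c)) a := by
    intro w i a
    simp only [Matrix.mulVec, dotProduct, hG, Matrix.of_apply]
    rw [Fintype.sum_prod_type, Fin.sum_univ_three]
    rfl
  -- pulling scalars out of mulVec
  have hsm : ∀ (D : Matrix (Fin N) (Fin N) ℝ) (c : ℝ) (w : Fin N → ℝ) (a : Fin N),
      D.mulVec (fun x => c * w x) a = c * D.mulVec w a := by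
    intro D c w a
    simp [Matrix.mulVec, dotProduct, Finset.mul_sum, mul_left_comm]
  have hμ' : Real.sqrt μ ≠ 0 := by positivity
  have hε' : Real.sqrt ε ≠ 0 := by positivity
  have hE : ∀ a : Fin N,
      D1.mulVec (fun c => E t (0, c)) a + D2.mulVec (fun c => E t (1, c)) a +
          D3.mulVec (fun c => E t (2, c)) a =
        D1.mulVec (fun c => E 0 (0, c)) a + D2.mulVec (fun c => E 0 (1, c)) a +
          D3.mulVec (fun c => E 0 (2, c)) a := by
    intro a
    have h := congrFun key (Sum.inr (0, a))
    simp only [Sum.elim_inr, hGmul, hsm] at h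
    have h' : Real.sqrt ε * (D1.mulVec (fun c => E t (0, c)) a +
        D2.mulVec (fun c => E t (1, c)) a + D3.mulVec (fun c => E t (2, c)) a) =
        Real.sqrt ε * (D1.mulVec (fun c => E 0 (0, c)) a +
        D2.mulVec (fun c => E 0 (1, c)) a + D3.mulVec (fun c => E 0 (2, c)) a) := by
      rw [mul_add, mul_add, mul_add, mul_add]; exact h
    exact mul_left_cancel₀ hε' h'
  have hH : ∀ a : Fin N,
      D1.mulVec (fun c => H t (0, c)) a + D2.mulVec (fun c => H t (1, c)) a +
          D3.mulVec (fun c => H t (2, c)) a =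
        D1.mulVec (fun c => H 0 (0, c)) a + D2.mulVec (fun c => H 0 (1, c)) a +
          D3.mulVec (fun c => H 0 (2, c)) a := by
    intro a
    have h := congrFun key (Sum.inl (0, a))
    simp only [Sum.elim_inl, hGmul, hsm] at h
    have h' : Real.sqrt μ * (D1.mulVec (fun c => H t (0, c)) a +
        D2.mulVec (fun c => H t (1, c)) a + D3.mulVec (fun c => H t (2, c)) a) =
        Real.sqrt μ * (D1.mulVec (fun c => H 0 (0, c)) a +
        D2.mulVec (fun c => H 0 (1, c)) a + D3.mulVec (fun c => H 0 (2, c)) a) := by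
      rw [mul_add, mul_add, mul_add, mul_add]; exact h
    exact mul_left_cancel₀ hμ' h'
  constructor
  · funext a
    simp only [Pi.add_apply, hsm]
    rw [← mul_add, ← mul_add, ← mul_add, ← mul_add, hE a]
  · funext a
    simp only [Pi.add_apply, hsm]
    rw [← mul_add, ← mul_add, ← mul_add, ← mul_add, hH a]
end
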